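/- Let J, D, B_λ be as above with tr(J) < 0, det(J) > 0, 0 < d < 1, and assume λ > 0 is such that tr(B_μ) > 0 and tr(B_μ)² - 4 det(B_μ) > 0 for all 0 ≤ μ ≤ λ. Then 0 < μ⁻_0 < μ⁻_λ < μ⁺_λ < μ⁺_0, where μ±_λ = (tr(B_λ) ± sqrt(tr(B_λ)² - 4 det(B_λ)))/2. -/
import Mathlib

open Matrix

/-- The diffusion matrix D = diag(1, d). -/
noncomputable def Dmat (d : ℝ) : Matrix (Fin 2) (Fin 2) ℝ := !![1, 0; 0, d]

/-- B_λ = D⁻¹ (J - λ I). -/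
noncomputable def Bmat (J : Matrix (Fin 2) (Fin 2) ℝ) (d lam : ℝ) :
    Matrix (Fin 2) (Fin 2) ℝ := (Dmat d)⁻¹ * (J - lam • 1)

lemma Dinv (d : ℝ) (hd : d ≠ 0) : (Dmat d)⁻¹ = !![1, 0; 0, d⁻¹] := by
  apply Matrix.inv_eq_right_inv
  rw [Dmat, Matrix.mul_fin_two]
  simp [Matrix.one_fin_two, mul_inv_cancel₀ hd]

lemma traceB (J : Matrix (Fin 2) (Fin 2) ℝ) (d μ : ℝ) (hd : d ≠ 0) :
    (Bmat J d μ).trace = (J 0 0 - μ) + (J 1 1 - μ) / d := by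
  rw [Bmat, Dinv d hd, Matrix.trace_fin_two]
  simp [Matrix.mul_apply, Fin.sum_univ_two, Matrix.sub_apply, Matrix.smul_apply,
    Matrix.one_apply, div_eq_inv_mul]

lemma detB (J : Matrix (Fin 2) (Fin 2) ℝ) (d μ : ℝ) (hd : d ≠ 0) :
    (Bmat J d μ).det = ((J 0 0 - μ) * (J 1 1 - μ) - J 0 1 * J 1 0) / d := by
  rw [Bmat, Matrix.det_mul, Matrix.det_nonsing_inv]
  have h1 : (Dmat d).det = d := by simp [Dmat]
  rw [h1, Matrix.det_fin_two]
  simp [Matrix.sub_apply, Matrix.smul_apply, Matrix.one_apply, Ring.inverse_eq_inv']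
  ring

/-- The larger eigenvalue μ⁺_λ of B_λ. -/
noncomputable def muP (J : Matrix (Fin 2) (Fin 2) ℝ) (d : ℝ) (lam : ℝ) : ℝ :=
  ((Bmat J d lam).trace +
    Real.sqrt ((Bmat J d lam).trace ^ 2 - 4 * (Bmat J d lam).det)) / 2

/-- The smaller eigenvalue μ⁻_λ of B_λ. -/
noncomputable def muM (J : Matrix (Fin 2) (Fin 2) ℝ) (d : ℝ) (lam : ℝ) : ℝ :=
  ((Bmat J d lam).trace -
    Real.sqrt ((Bmat J d lam).trace ^ 2 - 4 * (Bmat J d lam).det)) / 2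


lemma key_real (t0 t1 q0 q1 s0 s1 : ℝ)
    (ht0 : 0 < t0) (ht1 : 0 < t1) (hq0 : 0 < q0) (hq10 : q0 < q1)
    (hs0sq : s0 ^ 2 = t0 ^ 2 - 4 * q0) (hs1sq : s1 ^ 2 = t1 ^ 2 - 4 * q1)
    (hs0nn : 0 ≤ s0) (hs1nn : 0 ≤ s1) (hs1pos : 0 < s1) (hD : 0 < t0 - t1) :
    0 < (t0 - s0) / 2 ∧ (t0 - s0) / 2 < (t1 - s1) / 2 ∧
      (t1 - s1) / 2 < (t1 + s1) / 2 ∧ (t1 + s1) / 2 < (t0 + s0) / 2 := by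
  have hq1 : 0 < q1 := lt_trans hq0 hq10
  have hs0lt : s0 < t0 := by nlinarith
  have hs1lt : s1 < t1 := by nlinarith
  refine ⟨by linarith, ?_, by linarith, ?_⟩
  · have h2 : (s1 + (t0 - t1)) ^ 2 < s0 ^ 2 := by nlinarith
    have : s1 + (t0 - t1) < s0 := by nlinarith
    linarith
  · have h2 : s1 ^ 2 < (s0 + (t0 - t1)) ^ 2 := by nlinarith
    have : s1 < s0 + (t0 - t1) := by nlinarith
    linarith

theorem stmt7 (J : Matrix (Fin 2) (Fin 2) ℝ) (d lam : ℝ)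
    (hd : 0 < d) (hd1 : d < 1)
    (htr : J.trace < 0) (hdet : 0 < J.det) (hlam : 0 < lam)
    (hcond : ∀ μ : ℝ, 0 ≤ μ → μ ≤ lam →
      0 < (Bmat J d μ).trace ∧
      0 < (Bmat J d μ).trace ^ 2 - 4 * (Bmat J d μ).det) :
    0 < muM J d 0 ∧ muM J d 0 < muM J d lam ∧ muM J d lam < muP J d lam ∧
      muP J d lam < muP J d 0 := by
  have hd0 : d ≠ 0 := ne_of_gt hd
  obtain ⟨ht0, hdisc0⟩ := hcond 0 le_rfl hlam.le
  obtain ⟨ht1, hdisc1⟩ := hcond lam hlam.le le_rfl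
  have hs0sq : Real.sqrt ((Bmat J d 0).trace ^ 2 - 4 * (Bmat J d 0).det) ^ 2
      = (Bmat J d 0).trace ^ 2 - 4 * (Bmat J d 0).det := Real.sq_sqrt hdisc0.le
  have hs1sq : Real.sqrt ((Bmat J d lam).trace ^ 2 - 4 * (Bmat J d lam).det) ^ 2
      = (Bmat J d lam).trace ^ 2 - 4 * (Bmat J d lam).det := Real.sq_sqrt hdisc1.le
  have htrJ : J.trace = J 0 0 + J 1 1 := Matrix.trace_fin_two J
  have hdetJ : J.det = J 0 0 * J 1 1 - J 0 1 * J 1 0 := Matrix.det_fin_two J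
  have hD : 0 < (Bmat J d 0).trace - (Bmat J d lam).trace := by
    rw [traceB J d 0 hd0, traceB J d lam hd0]
    have : (J 0 0 - 0 + (J 1 1 - 0) / d) - (J 0 0 - lam + (J 1 1 - lam) / d)
        = lam + lam / d := by field_simp; ring
    rw [this]; positivity
  have hq10 : (Bmat J d 0).det < (Bmat J d lam).det := by
    rw [detB J d 0 hd0, detB J d lam hd0]
    rw [div_lt_div_iff_of_pos_right hd]
    rw [htrJ] at htr
    nlinarith
  have hq0pos : 0 < (Bmat J d 0).det := by
    rw [detB J d 0 hd0]
    apply div_pos _ hd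
    rw [hdetJ] at hdet
    nlinarith
  obtain ⟨h1, h2, h3, h4⟩ := key_real (Bmat J d 0).trace (Bmat J d lam).trace
    (Bmat J d 0).det (Bmat J d lam).det
    (Real.sqrt ((Bmat J d 0).trace ^ 2 - 4 * (Bmat J d 0).det))
    (Real.sqrt ((Bmat J d lam).trace ^ 2 - 4 * (Bmat J d lam).det))
    ht0 ht1 hq0pos hq10 hs0sq hs1sq (Real.sqrt_nonneg _) (Real.sqrt_nonneg _)
    (Real.sqrt_pos.mpr hdisc1) hD
  exact ⟨h1, h2, h3, h4⟩
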